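/- Theorem (GAN global optimum): with the optimal discriminator plugged in, the generator objective C(G) = E_{p_data}[log D*(x)] + E_{p_g}[log(1−D*(x))] equals −log 4 + 2·JSD(p_data ‖ p_g), and is globally minimized if and only if p_g = p_data, attaining the value −log 4. -/

import Mathlib

open scoped BigOperators

open Classical in
/-- Probability of an event under a weight function on a finite sample space. -/
noncomputable def Pr {Ω : Type*} [Fintype Ω] (μ : Ω → ℝ) (P : Ω → Prop) : ℝ :=
  ∑ ω, if P ω then μ ω else 0

/-- `μ` is a probability mass function. -/
def IsPMF {Ω : Type*} [Fintype Ω] (μ : Ω → ℝ) : Prop :=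
  (∀ ω, 0 ≤ μ ω) ∧ ∑ ω, μ ω = 1

/-- Conditional independence of `S` and `T` given `U` (multiplicative form). -/
def CondIndep {Ω α β γ : Type*} [Fintype Ω] (μ : Ω → ℝ)
    (S : Ω → α) (T : Ω → β) (U : Ω → γ) : Prop :=
  ∀ (a : α) (b : β) (c : γ),
    Pr μ (fun ω => S ω = a ∧ T ω = b ∧ U ω = c) * Pr μ (fun ω => U ω = c) =
    Pr μ (fun ω => S ω = a ∧ U ω = c) * Pr μ (fun ω => T ω = b ∧ U ω = c)

/-- Independence of `S` and `T`. -/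
def Indep {Ω α β : Type*} [Fintype Ω] (μ : Ω → ℝ) (S : Ω → α) (T : Ω → β) : Prop :=
  ∀ (a : α) (b : β),
    Pr μ (fun ω => S ω = a ∧ T ω = b) =
    Pr μ (fun ω => S ω = a) * Pr μ (fun ω => T ω = b)

open Classical in
/-- Finite Kullback–Leibler divergence (with the convention `0 log 0 = 0`). -/
noncomputable def KL {S : Type*} [Fintype S] (p q : S → ℝ) : ℝ :=
  ∑ x, if 0 < p x then p x * Real.log (p x / q x) else 0

/-- Jensen–Shannon divergence. -/
noncomputable def JSD {S : Type*} [Fintype S] (p q : S → ℝ) : ℝ :=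
  (1 / 2) * KL p (fun x => (p x + q x) / 2) + (1 / 2) * KL q (fun x => (p x + q x) / 2)

open Classical

lemma kl_mid {S : Type*} [Fintype S] (p q : S → ℝ)
    (hp : IsPMF p) (hq : IsPMF q) :
    0 ≤ KL p (fun x => (p x + q x) / 2) ∧
    (KL p (fun x => (p x + q x) / 2) = 0 → p = q) := by
  set m : S → ℝ := fun x => (p x + q x) / 2 with hm
  have hmpos : ∀ x, 0 < p x → 0 < m x := fun x hx => by
    have := hq.1 x; simp only [hm]; linarith
  set h : S → ℝ := fun x =>
    if 0 < p x then p x * Real.log (p x / m x) - (p x - m x) else m x with hh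
  have hsum1 : ∑ x, (if 0 < p x then p x else 0) = 1 := by
    rw [← hp.2]; apply Finset.sum_congr rfl; intro x _
    split_ifs with hx
    · rfl
    · exact (le_antisymm (not_lt.1 hx) (hp.1 x)).symm
  have hsumm : ∑ x, m x = 1 := by
    simp only [hm]
    rw [← Finset.sum_div, Finset.sum_add_distrib, hp.2, hq.2]; norm_num
  have hsumh : ∑ x, h x = KL p m := by
    have : ∀ x, h x = (if 0 < p x then p x * Real.log (p x / m x) else 0)
        - ((if 0 < p x then p x else 0) - m x) := by
      intro x; simp only [hh]; split_ifs <;> ring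
    rw [Finset.sum_congr rfl (fun x _ => this x), Finset.sum_sub_distrib,
      Finset.sum_sub_distrib, hsum1, hsumm, KL]
    ring
  have hpos : ∀ x, 0 ≤ h x := by
    intro x
    simp only [hh]
    split_ifs with hx
    · have hmx := hmpos x hx
      have h1 : Real.log (m x / p x) ≤ m x / p x - 1 :=
        Real.log_le_sub_one_of_pos (by positivity)
      have h2 : Real.log (p x / m x) = - Real.log (m x / p x) := by
        rw [← Real.log_inv]; congr 1; field_simp
      rw [h2]
      have h3 : p x * Real.log (m x / p x) ≤ p x * (m x / p x - 1) :=
        mul_le_mul_of_nonneg_left h1 (le_of_lt hx)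
      have h4 : p x * (m x / p x - 1) = m x - p x := by field_simp
      nlinarith
    · have := hp.1 x; have := hq.1 x; simp only [hm]; linarith
  refine ⟨by rw [← hsumh]; exact Finset.sum_nonneg fun x _ => hpos x, ?_⟩
  intro hK
  have hzero : ∀ x ∈ Finset.univ, h x = 0 :=
    (Finset.sum_eq_zero_iff_of_nonneg (fun x _ => hpos x)).1 (by rw [hsumh, hK])
  funext x
  have hx0 := hzero x (Finset.mem_univ x)
  simp only [hh] at hx0
  split_ifs at hx0 with hx
  · have hmx := hmpos x hx
    by_contra hne
    have hne' : m x / p x ≠ 1 := by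
      intro h1
      apply hne
      have : m x = p x := by field_simp at h1; linarith
      simp only [hm] at this; linarith
    have h1 : Real.log (m x / p x) < m x / p x - 1 :=
      Real.log_lt_sub_one_of_pos (by positivity) hne'
    have h2 : Real.log (p x / m x) = - Real.log (m x / p x) := by
      rw [← Real.log_inv]; congr 1; field_simp
    rw [h2] at hx0
    have h3 : p x * Real.log (m x / p x) < p x * (m x / p x - 1) :=
      mul_lt_mul_of_pos_left h1 hx
    have h4 : p x * (m x / p x - 1) = m x - p x := by field_simp
    nlinarith
  · have hpx : p x = 0 := le_antisymm (not_lt.1 hx) (hp.1 x)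
    have := hq.1 x
    simp only [hm] at hx0
    rw [hpx]; linarith

lemma kl_mid_expand {S : Type*} [Fintype S] (p q : S → ℝ)
    (hp : IsPMF p) (hq : ∀ x, 0 ≤ q x) :
    KL p (fun x => (p x + q x) / 2)
      = (∑ x, p x * Real.log (p x / (p x + q x))) + Real.log 2 := by
  rw [KL]
  have : ∀ x, (if 0 < p x then p x * Real.log (p x / ((p x + q x) / 2)) else 0)
      = p x * Real.log (p x / (p x + q x)) + p x * Real.log 2 := by
    intro x
    split_ifs with hx
    · have hs : 0 < p x + q x := by have := hq x; linarith
      have h1 : p x / ((p x + q x) / 2) = 2 * (p x / (p x + q x)) := by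
        field_simp
      rw [h1, Real.log_mul (by norm_num) (by positivity)]
      ring
    · have : p x = 0 := le_antisymm (not_lt.1 hx) (hp.1 x)
      rw [this]; ring
  rw [Finset.sum_congr rfl (fun x _ => this x), Finset.sum_add_distrib,
    ← Finset.sum_mul, hp.2]
  ring
/-- GAN global optimum: with the optimal discriminator plugged in,
the generator objective equals `-log 4 + 2 JSD(p_data ‖ p_g)`, is bounded below by
`-log 4`, and attains `-log 4` iff `p_g = p_data`. -/
theorem stmt_12 {S : Type*} [Fintype S] (pdata pg : S → ℝ)
    (hd : IsPMF pdata) (hg : IsPMF pg)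
    (C : ℝ)
    (hC : C = ∑ x, (pdata x * Real.log (pdata x / (pdata x + pg x)) +
                    pg x * Real.log (1 - pdata x / (pdata x + pg x)))) :
    C = -Real.log 4 + 2 * JSD pdata pg ∧
    -Real.log 4 ≤ C ∧
    (C = -Real.log 4 ↔ pg = pdata) := by
  classical
  have hcomm : (fun x => (pg x + pdata x) / 2) = (fun x => (pdata x + pg x) / 2) := by
    funext x; ring
  -- rewrite C as sum of two pieces
  have hC2 : C = (∑ x, pdata x * Real.log (pdata x / (pdata x + pg x))) +
      (∑ x, pg x * Real.log (pg x / (pdata x + pg x))) := by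
    rw [hC, ← Finset.sum_add_distrib]
    apply Finset.sum_congr rfl
    intro x _
    congr 2
    rcases eq_or_lt_of_le (by have := hd.1 x; have := hg.1 x; linarith :
        (0:ℝ) ≤ pdata x + pg x) with hs | hs
    · have h1 : pdata x = 0 := by have := hd.1 x; have := hg.1 x; linarith
      have h2 : pg x = 0 := by have := hd.1 x; have := hg.1 x; linarith
      rw [h1, h2]; norm_num
    · congr 1
      field_simp
      ring
  have hK1 := kl_mid_expand pdata pg hd hg.1
  have hK2' := kl_mid_expand pg pdata hg hd.1
  have hK2 : KL pg (fun x => (pdata x + pg x) / 2)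
      = (∑ x, pg x * Real.log (pg x / (pdata x + pg x))) + Real.log 2 := by
    rw [← hcomm, hK2']
    congr 2
    funext x
    rw [add_comm (pg x) (pdata x)]
  have hlog4 : Real.log 4 = 2 * Real.log 2 := by
    rw [show (4:ℝ) = 2 ^ 2 by norm_num, Real.log_pow]; norm_num
  have hJ : 2 * JSD pdata pg = C + Real.log 4 := by
    rw [JSD, hK1, hK2, hC2, hlog4]; ring
  have hnn1 := (kl_mid pdata pg hd hg).1
  have hmid2 := kl_mid pg pdata hg hd
  have hnn2 : 0 ≤ KL pg (fun x => (pdata x + pg x) / 2) := by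
    rw [← hcomm]; exact hmid2.1
  have hJnn : 0 ≤ JSD pdata pg := by
    rw [JSD]; positivity
  refine ⟨by linarith, by linarith, ?_, ?_⟩
  · intro hCeq
    have hJ0 : JSD pdata pg = 0 := by linarith
    have hKL2 : KL pg (fun x => (pg x + pdata x) / 2) = 0 := by
      rw [hcomm]
      rw [JSD] at hJ0
      linarith
    exact hmid2.2 hKL2
  · intro heq
    have : JSD pdata pg = 0 := by
      rw [heq]
      rw [JSD]
      have : KL pdata (fun x => (pdata x + pdata x) / 2) = 0 := by
        rw [KL]
        apply Finset.sum_eq_zero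
        intro x _
        split_ifs with hx
        · have : pdata x / ((pdata x + pdata x) / 2) = 1 := by
            field_simp
            norm_num
          rw [this, Real.log_one, mul_zero]
        · rfl
      rw [this]; ring
    linarith
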